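/- Define the m-length of a ΓW-partition based at m ∈ V^± to be the number of m-inseparable subsets contained in the side containing m. If 𝒫 and 𝒬 are distinct ΓW-partitions based at the same m ∈ V^± with equal m-length, then 𝒫 and 𝒬 are incompatible. -/

import Mathlib

namespace GW

variable {V : Type*}

/-- `V^±`: the set of generators and their inverses, identified with `V × Bool`;
`(v, true)` is the generator `v` and `(v, false)` is `v⁻¹`. -/
abbrev Vpm (V : Type*) := V × Bool

/-- The inverse of an element of `V^±`. -/
def pinv (x : Vpm V) : Vpm V := (x.1, !x.2)

/-- The link of a vertex: the set of vertices adjacent to it. -/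
def lk (Γ : SimpleGraph V) (v : V) : Set V := {w | Γ.Adj v w}

/-- The star of a vertex: its link together with the vertex itself. -/
def st (Γ : SimpleGraph V) (v : V) : Set V := lk Γ v ∪ {v}

/-- A vertex is principal if no vertex has strictly larger link. -/
def Principal (Γ : SimpleGraph V) (v : V) : Prop := ¬ ∃ w : V, lk Γ v ⊂ lk Γ w

/-- The relation `u ∼ w`: `lk(u) ⊆ st(w)` and `lk(w) ⊆ st(u)`. -/
def Eqv (Γ : SimpleGraph V) (u w : V) : Prop :=
  lk Γ u ⊆ st Γ w ∧ lk Γ w ⊆ st Γ u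

/-- For `S ⊆ V`, the set `S^± ⊆ V^±` of elements with underlying vertex in `S`. -/
def pm (S : Set V) : Set (Vpm V) := {x | x.1 ∈ S}

/-- `u` and `w` lie in the same connected component of `Γ − lk(m)`
(the induced subgraph on the complement of the link of `m`). -/
def SameComp (Γ : SimpleGraph V) (m u w : V) : Prop :=
  ∃ (hu : u ∈ (lk Γ m)ᶜ) (hw : w ∈ (lk Γ m)ᶜ),
    (Γ.induce ((lk Γ m)ᶜ : Set V)).Reachable ⟨u, hu⟩ ⟨w, hw⟩

/-- The vertex set of the connected component of `u` in `Γ − lk(m)`. -/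
def comp (Γ : SimpleGraph V) (m u : V) : Set V := {w | SameComp Γ m u w}

/-- `U ⊆ V^±` is `m`-inseparable if `U = {u}` or `U = {u⁻¹}` for a vertex `u` whose
component in `Γ − lk(m)` is the single vertex `u`, or `U = C^±` for a component `C`
of `Γ − lk(m)` with more than one vertex. -/
def Inseparable (Γ : SimpleGraph V) (m : Vpm V) (U : Set (Vpm V)) : Prop :=
  (∃ u : V, comp Γ m.1 u = {u} ∧ (U = {(u, true)} ∨ U = {(u, false)})) ∨
  (∃ u : V, u ∈ (lk Γ m.1)ᶜ ∧ comp Γ m.1 u ≠ {u} ∧ U = pm (comp Γ m.1 u))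

/-- A `ΓW`-subset based at `m`: a union of `m`-inseparable subsets containing `m`
but not `m⁻¹`. -/
def GWSubset (Γ : SimpleGraph V) (m : Vpm V) (P : Set (Vpm V)) : Prop :=
  m ∈ P ∧ pinv m ∉ P ∧ ∀ x ∈ P, ∃ U : Set (Vpm V), Inseparable Γ m U ∧ x ∈ U ∧ U ⊆ P

/-- `P* = V^± ∖ lk(m)^± ∖ P`. -/
def pstar (Γ : SimpleGraph V) (m : Vpm V) (P : Set (Vpm V)) : Set (Vpm V) :=
  (pm (lk Γ m.1))ᶜ \ P

/-- A `ΓW`-partition `{P | P* | lk(m)^±}` based at `m`, recorded together with its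
base `m` and the side `P` containing `m`; both sides are `ΓW`-subsets with at least
two elements. -/
structure GWPartition (Γ : SimpleGraph V) where
  base : Vpm V
  P : Set (Vpm V)
  hP : GWSubset Γ base P
  hPstar : GWSubset Γ (pinv base) (pstar Γ base P)
  thickP : 2 ≤ P.ncard
  thickPstar : 2 ≤ (pstar Γ base P).ncard

/-- The side `P*` of a `ΓW`-partition. -/
def GWPartition.Pstar {Γ : SimpleGraph V} (Pa : GWPartition Γ) : Set (Vpm V) :=
  pstar Γ Pa.base Pa.P

/-- The (unordered) pair of sides of a `ΓW`-partition; two `ΓW`-partitions are equal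
as partitions exactly when they have the same sides. -/
def sidesOf {Γ : SimpleGraph V} (Pa : GWPartition Γ) : Set (Set (Vpm V)) :=
  {Pa.P, Pa.Pstar}

/-- A `ΓW`-partition splits a vertex `v` if `v` and `v⁻¹` lie in different sides. -/
def Splits {Γ : SimpleGraph V} (Pa : GWPartition Γ) (v : V) : Prop :=
  ((v, true) ∈ Pa.P ∧ (v, false) ∈ Pa.Pstar) ∨
  ((v, false) ∈ Pa.P ∧ (v, true) ∈ Pa.Pstar)

/-- Compatibility of `ΓW`-partitions: some pair of sides is disjoint, or the
underlying vertices of the bases are adjacent with different stars. -/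
def Compatible {Γ : SimpleGraph V} (Pa Qa : GWPartition Γ) : Prop :=
  (Pa.P ∩ Qa.P = ∅ ∨ Pa.P ∩ Qa.Pstar = ∅ ∨ Pa.Pstar ∩ Qa.P = ∅ ∨ Pa.Pstar ∩ Qa.Pstar = ∅) ∨
  (Γ.Adj Pa.base.1 Qa.base.1 ∧ st Γ Pa.base.1 ≠ st Γ Qa.base.1)

/-- Weak compatibility: some pair of sides is disjoint, or the underlying vertices of
the bases are adjacent (hence distinct). -/
def WeakCompatible {Γ : SimpleGraph V} (Pa Qa : GWPartition Γ) : Prop :=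
  (Pa.P ∩ Qa.P = ∅ ∨ Pa.P ∩ Qa.Pstar = ∅ ∨ Pa.Pstar ∩ Qa.P = ∅ ∨ Pa.Pstar ∩ Qa.Pstar = ∅) ∨
  Γ.Adj Pa.base.1 Qa.base.1

/-- A `ΓW`-partition is based at the vertex `u` if it is based at `u` or `u⁻¹`, i.e.
`lk(u)` equals the link of the recorded base and the partition separates `u` from
`u⁻¹`. -/
def BasedAtVtx {Γ : SimpleGraph V} (Pa : GWPartition Γ) (u : V) : Prop :=
  lk Γ u = lk Γ Pa.base.1 ∧ Splits Pa u

/-- `M(U)`: the largest size of a collection of pairwise distinct, pairwise compatible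
`ΓW`-partitions, each based at some element of `U`. -/
noncomputable def M (Γ : SimpleGraph V) (U : Set V) : ℕ :=
  sSup {k : ℕ | ∃ C : Finset (GWPartition Γ), C.card = k ∧
    (∀ Pa ∈ C, Pa.base.1 ∈ U) ∧
    (∀ Pa ∈ C, ∀ Qa ∈ C, Pa ≠ Qa → sidesOf Pa ≠ sidesOf Qa ∧ Compatible Pa Qa)}

/-- `μ(U)`: the largest size of a collection of pairwise distinct, pairwise weakly
compatible `ΓW`-partitions, each based at some element of `U`. -/
noncomputable def Mweak (Γ : SimpleGraph V) (U : Set V) : ℕ :=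
  sSup {k : ℕ | ∃ C : Finset (GWPartition Γ), C.card = k ∧
    (∀ Pa ∈ C, Pa.base.1 ∈ U) ∧
    (∀ Pa ∈ C, ∀ Qa ∈ C, Pa ≠ Qa → sidesOf Pa ≠ sidesOf Qa ∧ WeakCompatible Pa Qa)}

/-- The commutation relations defining the right-angled Artin group `A_Γ`. -/
def Rels (Γ : SimpleGraph V) : Set (FreeGroup V) :=
  {r | ∃ u w : V, Γ.Adj u w ∧
    r = FreeGroup.of u * FreeGroup.of w * (FreeGroup.of u)⁻¹ * (FreeGroup.of w)⁻¹}

/-- The right-angled Artin group `A_Γ`. -/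
abbrev RAAG (Γ : SimpleGraph V) := PresentedGroup (Rels Γ)

/-- The generator of `A_Γ` corresponding to a vertex. -/
def ofv (Γ : SimpleGraph V) (v : V) : RAAG Γ := PresentedGroup.of v

/-- The element of `A_Γ` corresponding to an element of `V^±`. -/
def gen (Γ : SimpleGraph V) (x : Vpm V) : RAAG Γ :=
  if x.2 then ofv Γ x.1 else (ofv Γ x.1)⁻¹

open scoped Classical in
/-- The image of the generator `v` under the Whitehead automorphism `φ(P, m)`. -/
noncomputable def whImage (Γ : SimpleGraph V) (P : Set (Vpm V)) (m : Vpm V) (v : V) :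
    RAAG Γ :=
  if (v, true) ∈ P ∧ (v, false) ∈ P then gen Γ m * ofv Γ v * (gen Γ m)⁻¹
  else if v ≠ m.1 ∧ (v, true) ∈ P ∧ (v, false) ∈ pstar Γ m P then ofv Γ v * (gen Γ m)⁻¹
  else if v ≠ m.1 ∧ (v, false) ∈ P ∧ (v, true) ∈ pstar Γ m P then gen Γ m * ofv Γ v
  else ofv Γ v

/-- `φ` is the Whitehead automorphism `φ(P, m)`: it sends each generator `v` to
`mvm⁻¹` if `v, v⁻¹ ∈ P`; to `vm⁻¹` if `v ∈ P`, `v⁻¹ ∈ P*`, `v ≠ m^{±1}`; to `mv` if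
`v⁻¹ ∈ P`, `v ∈ P*`, `v ≠ m^{±1}`; and to `v` otherwise. -/
def IsWhitehead (Γ : SimpleGraph V) (P : Set (Vpm V)) (m : Vpm V)
    (φ : MulAut (RAAG Γ)) : Prop :=
  ∀ v : V, φ (ofv Γ v) = whImage Γ P m v

/-- An automorphism is inner if it is conjugation by some group element. -/
def IsInner {G : Type*} [Group G] (φ : MulAut G) : Prop :=
  ∃ g : G, ∀ x, φ x = g * x * g⁻¹

/-- Two automorphisms commute as outer automorphisms iff their commutator is inner. -/
def CommuteOuter {G : Type*} [Group G] (φ ψ : MulAut G) : Prop :=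
  IsInner (φ * ψ * φ⁻¹ * ψ⁻¹)

/-- The subgroup of inner automorphisms. -/
def Inn (G : Type*) [Group G] : Subgroup (MulAut G) := (MulAut.conj : G →* MulAut G).range

instance innNormal (G : Type*) [Group G] : (Inn G).Normal := by
  constructor
  intro n hn φ
  obtain ⟨g, rfl⟩ := hn
  refine ⟨φ g, ?_⟩
  ext x
  simp [MulAut.conj, mul_assoc]

/-- The outer automorphism group `Out(G) = Aut(G)/Inn(G)`. -/
abbrev Out (G : Type*) [Group G] := MulAut G ⧸ Inn G

/-- The projection `Aut(G) → Out(G)`. -/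
def toOut (G : Type*) [Group G] : MulAut G →* Out G := QuotientGroup.mk' (Inn G)


/-- The `m`-length of a `ΓW`-partition based at `m`: the number of `m`-inseparable
subsets contained in the side containing `m`. -/
noncomputable def mLength {V : Type*} {Γ : SimpleGraph V} (Pa : GWPartition Γ) : ℕ :=
  Set.ncard {U : Set (Vpm V) | Inseparable Γ Pa.base U ∧ U ⊆ Pa.P}

theorem insep_subset' {Γ : SimpleGraph V} {m : Vpm V} {U : Set (Vpm V)}
    (h : Inseparable Γ m U) : U ⊆ (pm (lk Γ m.1))ᶜ := by
  rcases h with ⟨u, hcomp, hU | hU⟩ | ⟨u, hu, _, hU⟩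
  · subst hU
    rintro x rfl
    have : u ∈ comp Γ m.1 u := hcomp ▸ rfl
    obtain ⟨hu, -⟩ := this
    exact hu
  · subst hU
    rintro x rfl
    have : u ∈ comp Γ m.1 u := hcomp ▸ rfl
    obtain ⟨hu, -⟩ := this
    exact hu
  · subst hU
    rintro x hx
    obtain ⟨-, hw, -⟩ := hx
    exact hw

theorem gwsubset_subset' {Γ : SimpleGraph V} {m : Vpm V} {P : Set (Vpm V)}
    (h : GWSubset Γ m P) : P ⊆ (pm (lk Γ m.1))ᶜ := by
  intro x hx
  obtain ⟨U, hU, hxU, -⟩ := h.2.2 x hx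
  exact insep_subset' hU hxU

theorem key_eq' {Γ : SimpleGraph V} [Fintype V] {m : Vpm V}
    (Pa Qa : GWPartition Γ) (hPa : Pa.base = m) (hQa : Qa.base = m)
    (hlen : mLength Pa = mLength Qa) (hsub : Pa.P ⊆ Qa.P) : Pa.P = Qa.P := by
  set A := {U : Set (Vpm V) | Inseparable Γ m U ∧ U ⊆ Pa.P} with hA
  set B := {U : Set (Vpm V) | Inseparable Γ m U ∧ U ⊆ Qa.P} with hB
  have hAB : A ⊆ B := fun U hU => ⟨hU.1, hU.2.trans hsub⟩
  have h1 : mLength Pa = A.ncard := by rw [mLength, hPa]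
  have h2 : mLength Qa = B.ncard := by rw [mLength, hQa]
  rw [h1, h2] at hlen
  have hEq : A = B := Set.eq_of_subset_of_ncard_le hAB hlen.ge (Set.toFinite B)
  refine hsub.antisymm fun x hx => ?_
  obtain ⟨U, hU, hxU, hUQ⟩ := Qa.hP.2.2 x hx
  have hUB : U ∈ B := ⟨hQa ▸ hU, hUQ⟩
  rw [← hEq] at hUB
  exact hUB.2 hxU

theorem sides_eq_of_P_eq {Γ : SimpleGraph V} {m : Vpm V}
    (Pa Qa : GWPartition Γ) (hPa : Pa.base = m) (hQa : Qa.base = m)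
    (h : Pa.P = Qa.P) : sidesOf Pa = sidesOf Qa := by
  unfold sidesOf GWPartition.Pstar
  rw [h, hPa, hQa]

/-- Distinct `ΓW`-partitions based at the same `m ∈ V^±` with equal `m`-length are
incompatible. -/
theorem stmt4 {V : Type*} [Fintype V] (Γ : SimpleGraph V) (m : Vpm V)
    (Pa Qa : GWPartition Γ) (hPa : Pa.base = m) (hQa : Qa.base = m)
    (hne : sidesOf Pa ≠ sidesOf Qa) (hlen : mLength Pa = mLength Qa) :
    ¬ Compatible Pa Qa := by
  rintro (h | ⟨hadj, -⟩)
  · have hmP : m ∈ Pa.P := hPa ▸ Pa.hP.1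
    have hmQ : m ∈ Qa.P := hQa ▸ Qa.hP.1
    have hmPs : pinv m ∈ Pa.Pstar := by
      show pinv m ∈ pstar Γ Pa.base Pa.P
      rw [hPa]
      have := Pa.hPstar.1
      rwa [hPa] at this
    have hmQs : pinv m ∈ Qa.Pstar := by
      show pinv m ∈ pstar Γ Qa.base Qa.P
      rw [hQa]
      have := Qa.hPstar.1
      rwa [hQa] at this
    have hPcompl : Pa.P ⊆ (pm (lk Γ m.1))ᶜ := by
      have := gwsubset_subset' Pa.hP
      rwa [hPa] at this
    have hQcompl : Qa.P ⊆ (pm (lk Γ m.1))ᶜ := by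
      have := gwsubset_subset' Qa.hP
      rwa [hQa] at this
    rcases h with h | h | h | h
    · exact absurd h (Set.nonempty_iff_ne_empty.mp ⟨m, hmP, hmQ⟩)
    · -- Pa.P ∩ Qa.Pstar = ∅, so Pa.P ⊆ Qa.P
      have hsub : Pa.P ⊆ Qa.P := by
        intro x hx
        by_contra hxQ
        have : x ∈ Qa.Pstar := by
          show x ∈ pstar Γ Qa.base Qa.P
          rw [hQa]
          exact ⟨hPcompl hx, hxQ⟩
        exact absurd h (Set.nonempty_iff_ne_empty.mp ⟨x, hx, this⟩)
      exact hne (sides_eq_of_P_eq Pa Qa hPa hQa (key_eq' Pa Qa hPa hQa hlen hsub))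
    · -- Pa.Pstar ∩ Qa.P = ∅, so Qa.P ⊆ Pa.P
      have hsub : Qa.P ⊆ Pa.P := by
        intro x hx
        by_contra hxP
        have : x ∈ Pa.Pstar := by
          show x ∈ pstar Γ Pa.base Pa.P
          rw [hPa]
          exact ⟨hQcompl hx, hxP⟩
        exact absurd h (Set.nonempty_iff_ne_empty.mp ⟨x, this, hx⟩)
      exact hne (sides_eq_of_P_eq Pa Qa hPa hQa
        (key_eq' Qa Pa hQa hPa hlen.symm hsub).symm)
    · exact absurd h (Set.nonempty_iff_ne_empty.mp ⟨pinv m, hmPs, hmQs⟩)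
  · rw [hPa, hQa] at hadj
    exact Γ.ne_of_adj hadj rfl

end GW
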